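/- Let G be a connected weighted graph on n ≥ 2 vertices with Laplacian L_G, and let H be a weighted graph on the same vertices whose Laplacian L_H makes it a (1±ε)-spectral sparsifier of G with ε ≥ 0. Let γ > 0, l ≥ 1, and let S be any subset of {1,…,n}. Then for every f ∈ F: ‖P_F((lγ·L_H + I_S)·f)‖₂ ≥ (lγ(1−ε)λ₁ − 1)·‖f‖₂. -/
import Mathlib


open Matrix BigOperators Finset
open scoped Classical

noncomputable section

/-- The Laplacian of a weighted graph given by its adjacency matrix. -/
def Lap {n : ℕ} (A : Matrix (Fin n) (Fin n) ℝ) : Matrix (Fin n) (Fin n) ℝ :=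
  Matrix.diagonal (fun i => ∑ j, A i j) - A

/-- `A` is a weighted graph adjacency matrix: symmetric, nonnegative, zero diagonal. -/
def IsWeightedGraph {n : ℕ} (A : Matrix (Fin n) (Fin n) ℝ) : Prop :=
  A.IsSymm ∧ (∀ i j, 0 ≤ A i j) ∧ (∀ i, A i i = 0)

/-- The graph with edge set `{(i,j) : A i j > 0}` is connected. -/
def GraphConnected {n : ℕ} (A : Matrix (Fin n) (Fin n) ℝ) : Prop :=
  (SimpleGraph.fromRel (fun i j => 0 < A i j)).Connected

/-- `LH` is the Laplacian of a `(1±ε)`-spectral sparsifier of the graph with Laplacian `LG`. -/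
def IsSparsifier {n : ℕ} (LG LH : Matrix (Fin n) (Fin n) ℝ) (ε : ℝ) : Prop :=
  ∀ x : Fin n → ℝ,
    (1 - ε) * (x ⬝ᵥ LG.mulVec x) ≤ x ⬝ᵥ LH.mulVec x ∧
    x ⬝ᵥ LH.mulVec x ≤ (1 + ε) * (x ⬝ᵥ LG.mulVec x)

/-- Orthogonal projection `I - (1/n)·1·1ᵀ` onto `F = {f : ⟨f,1⟩ = 0}`. -/
def PF (n : ℕ) : Matrix (Fin n) (Fin n) ℝ :=
  1 - (n : ℝ)⁻¹ • Matrix.of (fun _ _ => (1 : ℝ))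

/-- Diagonal 0/1 matrix selecting the coordinates in `S`. -/
def IS {n : ℕ} (S : Finset (Fin n)) : Matrix (Fin n) (Fin n) ℝ :=
  Matrix.diagonal (fun i => if i ∈ S then (1 : ℝ) else 0)

/-- Euclidean norm of a vector. -/
def vnorm {n : ℕ} (x : Fin n → ℝ) : ℝ := Real.sqrt (∑ i, (x i) ^ 2)

/-- `lam` is the smallest eigenvalue of `L` restricted to `F = {x : ⟨x,1⟩ = 0}`, i.e. the
minimum of the Rayleigh quotient over nonzero vectors of `F`. -/
def IsLam1 {n : ℕ} (L : Matrix (Fin n) (Fin n) ℝ) (lam : ℝ) : Prop :=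
  IsLeast {r | ∃ x : Fin n → ℝ, x ≠ 0 ∧ (∑ i, x i) = 0 ∧
    r = (x ⬝ᵥ L.mulVec x) / (∑ i, (x i) ^ 2)} lam

/-- `lam` is the largest eigenvalue of `L`: the maximum of the Rayleigh quotient. -/
def IsLamN {n : ℕ} (L : Matrix (Fin n) (Fin n) ℝ) (lam : ℝ) : Prop :=
  IsGreatest {r | ∃ x : Fin n → ℝ, x ≠ 0 ∧
    r = (x ⬝ᵥ L.mulVec x) / (∑ i, (x i) ^ 2)} lam

/-- `Lp` is the Moore–Penrose pseudoinverse of `L`. -/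
def IsMoorePenrose {n : ℕ} (L Lp : Matrix (Fin n) (Fin n) ℝ) : Prop :=
  L * Lp * L = L ∧ Lp * L * Lp = Lp ∧ (L * Lp).IsSymm ∧ (Lp * L).IsSymm

/-- The stability constant `β` of sparse-HFS. -/
def betaHFS (l : ℕ) (γ ε lam1 k : ℝ) : ℝ :=
  1.5 * k * Real.sqrt l / ((l : ℝ) * γ * (1 - ε) * lam1 - 1) ^ 2 +
  Real.sqrt 2 * k / ((l : ℝ) * γ * (1 - ε) * lam1 - 1)

/-- `π(l,u) = (lu/(l+u-0.5))·(1/(1 - 1/(2·max{l,u})))`. -/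
def piLU (l u : ℕ) : ℝ :=
  ((l : ℝ) * u / ((l : ℝ) + u - 0.5)) * (1 / (1 - 1 / (2 * ((max l u : ℕ) : ℝ))))


lemma lap_quad' {n : ℕ} (A : Matrix (Fin n) (Fin n) ℝ) (x : Fin n → ℝ) :
    x ⬝ᵥ (Lap A).mulVec x = ∑ i, ∑ j, (A i j * x i * x i - A i j * x i * x j) := by
  have hd : x ⬝ᵥ (Matrix.diagonal fun i => ∑ j, A i j).mulVec x
      = ∑ i, ∑ j, A i j * x i * x i := by
    simp only [dotProduct, mulVec_diagonal]
    refine Finset.sum_congr rfl fun i _ => ?_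
    rw [Finset.sum_mul, Finset.mul_sum]
    exact Finset.sum_congr rfl fun j _ => by ring
  have ha : x ⬝ᵥ A.mulVec x = ∑ i, ∑ j, A i j * x i * x j := by
    simp only [dotProduct, mulVec, Finset.mul_sum]
    exact Finset.sum_congr rfl fun i _ => Finset.sum_congr rfl fun j _ => by ring
  rw [Lap, sub_mulVec, dotProduct_sub, hd, ha, ← Finset.sum_sub_distrib]
  exact Finset.sum_congr rfl fun i _ => by rw [← Finset.sum_sub_distrib]

lemma lap_nonneg' {n : ℕ} {A : Matrix (Fin n) (Fin n) ℝ} (hs : A.IsSymm)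
    (hnn : ∀ i j, 0 ≤ A i j) (x : Fin n → ℝ) : 0 ≤ x ⬝ᵥ (Lap A).mulVec x := by
  have key : 2 * (x ⬝ᵥ (Lap A).mulVec x) = ∑ i, ∑ j, A i j * (x i - x j) ^ 2 := by
    rw [lap_quad']
    have h1 : ∀ i j : Fin n, A i j * (x i - x j) ^ 2 =
        (A i j * x i * x i - A i j * x i * x j) +
        (A i j * x j * x j - A i j * x i * x j) := fun i j => by ring
    simp_rw [h1, Finset.sum_add_distrib]
    have hc : ∑ i, ∑ j, (A i j * x j * x j - A i j * x i * x j)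
        = ∑ i, ∑ j, (A i j * x i * x i - A i j * x i * x j) := by
      rw [Finset.sum_comm]
      refine Finset.sum_congr rfl fun i _ => Finset.sum_congr rfl fun j _ => ?_
      rw [hs.apply i j]; ring
    rw [hc]; ring
  have hpos : 0 ≤ ∑ i, ∑ j, A i j * (x i - x j) ^ 2 :=
    Finset.sum_nonneg fun i _ => Finset.sum_nonneg fun j _ =>
      mul_nonneg (hnn i j) (sq_nonneg _)
  linarith

lemma pf_dot' {n : ℕ} (f y : Fin n → ℝ) (hf : ∑ i, f i = 0) :
    f ⬝ᵥ (PF n).mulVec y = f ⬝ᵥ y := by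
  have h2 : f ⬝ᵥ ((n : ℝ)⁻¹ • Matrix.of (fun _ _ => (1:ℝ))).mulVec y = 0 := by
    rw [smul_mulVec, dotProduct_smul]
    have h3 : (Matrix.of (fun _ _ => (1:ℝ)) : Matrix (Fin n) (Fin n) ℝ).mulVec y
        = fun _ => ∑ j, y j := by
      ext i; simp [mulVec, dotProduct]
    rw [h3]
    simp [dotProduct, ← Finset.sum_mul, hf]
  rw [PF, sub_mulVec, dotProduct_sub, one_mulVec, h2, sub_zero]

lemma vnorm_nonneg' {n : ℕ} (x : Fin n → ℝ) : 0 ≤ vnorm x := Real.sqrt_nonneg _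

lemma dot_le_vnorm_mul_vnorm' {n : ℕ} (f g : Fin n → ℝ) :
    f ⬝ᵥ g ≤ vnorm f * vnorm g := by
  have h := Finset.sum_mul_sq_le_sq_mul_sq Finset.univ f g
  calc f ⬝ᵥ g ≤ |f ⬝ᵥ g| := le_abs_self _
    _ = Real.sqrt ((f ⬝ᵥ g) ^ 2) := (Real.sqrt_sq_eq_abs _).symm
    _ ≤ Real.sqrt ((∑ i, f i ^ 2) * ∑ i, g i ^ 2) := Real.sqrt_le_sqrt h
    _ = vnorm f * vnorm g := by
        rw [Real.sqrt_mul (Finset.sum_nonneg fun i _ => sq_nonneg _)]; rfl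

/-- lower bound on the norm of `P_F((lγ·L_H + I_S)·f)` for `f ∈ F`. -/
theorem stmt_3 {n : ℕ} (hn : 2 ≤ n)
    (AG AH : Matrix (Fin n) (Fin n) ℝ)
    (hG : IsWeightedGraph AG) (hGc : GraphConnected AG)
    (hH : IsWeightedGraph AH)
    (ε : ℝ) (hε : 0 ≤ ε)
    (hsp : IsSparsifier (Lap AG) (Lap AH) ε)
    (γ : ℝ) (hγ : 0 < γ)
    (l : ℕ) (hl : 1 ≤ l)
    (S : Finset (Fin n))
    (lam1 : ℝ) (hlam1 : IsLam1 (Lap AG) lam1)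
    (f : Fin n → ℝ) (hf : ∑ i, f i = 0) :
    vnorm ((PF n).mulVec ((((l : ℝ) * γ) • Lap AH + IS S).mulVec f)) ≥
      ((l : ℝ) * γ * (1 - ε) * lam1 - 1) * vnorm f := by
  set c : ℝ := (l : ℝ) * γ * (1 - ε) * lam1 with hc
  set M : Matrix (Fin n) (Fin n) ℝ := ((l : ℝ) * γ) • Lap AH + IS S with hM
  set g : Fin n → ℝ := (PF n).mulVec (M.mulVec f) with hg
  have hvg : 0 ≤ vnorm g := vnorm_nonneg' g
  have hvf : 0 ≤ vnorm f := vnorm_nonneg' f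
  by_cases htriv : (c - 1) * vnorm f ≤ 0
  · exact le_trans htriv hvg
  push_neg at htriv
  have hvf0 : 0 < vnorm f := by
    rcases lt_or_eq_of_le hvf with h | h
    · exact h
    · exfalso; rw [← h, mul_zero] at htriv; exact lt_irrefl 0 htriv
  have hc1 : 1 < c := by nlinarith
  have hsum : 0 < ∑ i, f i ^ 2 := Real.sqrt_pos.mp hvf0
  have hf0 : f ≠ 0 := by
    intro h; rw [h] at hsum; simp at hsum
  -- lam1 nonneg
  have hlam_mem := hlam1.1
  obtain ⟨x, hx0, hxs, hxr⟩ := hlam_mem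
  have hlam_nn : 0 ≤ lam1 := by
    rw [hxr]
    exact div_nonneg (lap_nonneg' hG.1 hG.2.1 x) (Finset.sum_nonneg fun i _ => sq_nonneg _)
  have hlγ : 0 < (l : ℝ) * γ := by
    have : (0:ℝ) < l := by exact_mod_cast Nat.lt_of_lt_of_le Nat.zero_lt_one hl
    positivity
  have hεlt : 0 < 1 - ε := by
    by_contra h
    push_neg at h
    have : c ≤ 0 := mul_nonpos_of_nonpos_of_nonneg (by nlinarith) hlam_nn
    linarith
  -- lower bound on Rayleigh quotient of f
  have hray : lam1 ≤ (f ⬝ᵥ (Lap AG).mulVec f) / (∑ i, f i ^ 2) :=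
    hlam1.2 ⟨f, hf0, hf, rfl⟩
  have hLG : lam1 * ∑ i, f i ^ 2 ≤ f ⬝ᵥ (Lap AG).mulVec f := by
    rw [← div_mul_cancel₀ (f ⬝ᵥ (Lap AG).mulVec f) (ne_of_gt hsum)]
    exact mul_le_mul_of_nonneg_right hray (le_of_lt hsum)
  -- quadratic form of M
  have hIS : 0 ≤ f ⬝ᵥ (IS S).mulVec f := by
    simp only [IS, dotProduct, mulVec_diagonal]
    refine Finset.sum_nonneg fun i _ => ?_
    split_ifs <;> nlinarith [sq_nonneg (f i)]
  have hMf : c * ∑ i, f i ^ 2 ≤ f ⬝ᵥ M.mulVec f := by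
    rw [hM, add_mulVec, dotProduct_add, smul_mulVec, dotProduct_smul, smul_eq_mul]
    have h1 : (1 - ε) * (f ⬝ᵥ (Lap AG).mulVec f) ≤ f ⬝ᵥ (Lap AH).mulVec f := (hsp f).1
    have h2 : (1 - ε) * (lam1 * ∑ i, f i ^ 2) ≤ (1 - ε) * (f ⬝ᵥ (Lap AG).mulVec f) :=
      mul_le_mul_of_nonneg_left hLG (le_of_lt hεlt)
    nlinarith
  -- relate f ⬝ᵥ g with f ⬝ᵥ M f
  have hfg : f ⬝ᵥ g = f ⬝ᵥ M.mulVec f := pf_dot' f (M.mulVec f) hf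
  have hCS : f ⬝ᵥ g ≤ vnorm f * vnorm g := dot_le_vnorm_mul_vnorm' f g
  have hsq : vnorm f * vnorm f = ∑ i, f i ^ 2 :=
    Real.mul_self_sqrt (le_of_lt hsum)
  have hmain : c * vnorm f ≤ vnorm g := by
    have h : c * (vnorm f * vnorm f) ≤ vnorm f * vnorm g := by
      rw [hsq]; linarith [hMf, hfg ▸ hCS]
    nlinarith
  calc (c - 1) * vnorm f ≤ c * vnorm f := by nlinarith
    _ ≤ vnorm g := hmain
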